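/- Let G₁ and G₂ be finite simple graphs and let G₁ + G₂ denote their disjoint union. Then for every natural number k, the number of edges of C_k(G₁ + G₂) equals (number of edges of C_k(G₁)) · P_{G₂}(k) + (number of edges of C_k(G₂)) · P_{G₁}(k), where P_G(k) denotes the number of proper k-colorings of G. -/

import Mathlib

open SimpleGraph Finset

/-- A proper coloring of `G` with colors `Fin k` (value `i` represents color `i+1`). -/
def IsProperColoring {V : Type*} (G : SimpleGraph V) {k : ℕ} (c : V → Fin k) : Prop :=
  ∀ ⦃u v : V⦄, G.Adj u v → c u ≠ c v

/-- The `k`-coloring graph of `G`: vertices are proper `k`-colorings of `G`, two colorings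
adjacent iff they differ at exactly one vertex of `G`. -/
def ColGraph {V : Type*} (G : SimpleGraph V) (k : ℕ) :
    SimpleGraph {c : V → Fin k // IsProperColoring G c} where
  Adj c d := ∃! v, c.1 v ≠ d.1 v
  symm := by
    constructor
    rintro c d ⟨v, hv, hu⟩
    exact ⟨v, hv.symm, fun w hw => hu w hw.symm⟩
  loopless := by
    constructor
    rintro c ⟨v, hv, -⟩
    exact hv rfl

/-- The number of edges of the `k`-coloring graph of `G`. -/
noncomputable def numEdges {V : Type*} (G : SimpleGraph V) (k : ℕ) : ℕ :=
  Nat.card (ColGraph G k).edgeSet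

/-- The number of proper `k`-colorings of `G` (the chromatic polynomial evaluated at `k`). -/
noncomputable def numColorings {V : Type*} (G : SimpleGraph V) (k : ℕ) : ℕ :=
  Nat.card {c : V → Fin k // IsProperColoring G c}

/-- `π_G^{(H)}(k)`: the number of vertex subsets of the `k`-coloring graph of `G`
inducing a subgraph isomorphic to `H`. -/
noncomputable def inducedCopies {V W : Type*} (G : SimpleGraph V) (H : SimpleGraph W)
    (k : ℕ) : ℕ :=
  Nat.card {S : Set {c : V → Fin k // IsProperColoring G c} //
    Nonempty ((ColGraph G k).induce S ≃g H)}

/-- The number of proper `k`-colorings of `G − v` in which every neighbor of `v`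
avoids the first `t` colors (colors `1, …, t`, i.e. `Fin k` values `< t`). -/
noncomputable def restrainedCount {V : Type*} (G : SimpleGraph V) (v : V) (t k : ℕ) : ℕ :=
  Nat.card {c : ↥{w : V | w ≠ v} → Fin k //
    IsProperColoring (G.induce {w : V | w ≠ v}) c ∧
    ∀ w : ↥{w : V | w ≠ v}, G.Adj v ↑w → t ≤ (c w).val}

/-- The `s`-dimensional hypercube graph: vertices are functions `Fin s → Bool`,
adjacent iff they differ in exactly one coordinate. -/
def hypercube (s : ℕ) : SimpleGraph (Fin s → Bool) where
  Adj x y := ∃! i, x i ≠ y i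
  symm := by
    constructor
    rintro x y ⟨i, hi, hu⟩
    exact ⟨i, hi.symm, fun j hj => hu j hj.symm⟩
  loopless := by
    constructor
    rintro x ⟨i, hi, -⟩
    exact hi rfl


lemma existsUnique_sum_iff {α β : Type*} (p : α ⊕ β → Prop) :
    (∃! x, p x) ↔ ((∃! a, p (.inl a)) ∧ ∀ b, ¬ p (.inr b)) ∨
      ((∃! b, p (.inr b)) ∧ ∀ a, ¬ p (.inl a)) := by
  constructor
  · rintro ⟨x, hx, hu⟩
    cases x with
    | inl a =>
      refine Or.inl ⟨⟨a, hx, fun a' ha' => by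
        have := hu _ ha'; injection this⟩,
        fun b hb => by have := hu _ hb; simp at this⟩
    | inr b =>
      refine Or.inr ⟨⟨b, hx, fun b' hb' => by
        have := hu _ hb'; injection this⟩,
        fun a ha => by have := hu _ ha; simp at this⟩
  · rintro (⟨⟨a, ha, hu⟩, hb⟩ | ⟨⟨b, hb, hu⟩, ha⟩)
    · exact ⟨.inl a, ha, fun x hx => by cases x with
        | inl a' => exact congrArg _ (hu a' hx)
        | inr b' => exact absurd hx (hb b')⟩
    · exact ⟨.inr b, hb, fun x hx => by cases x with
        | inl a' => exact absurd hx (ha a')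
        | inr b' => exact congrArg _ (hu b' hx)⟩

lemma boxProd_nat_card_edgeSet {α β : Type*} [Fintype α] [Fintype β]
    (A : SimpleGraph α) (B : SimpleGraph β) :
    Nat.card (A □ B).edgeSet =
      Nat.card A.edgeSet * Fintype.card β + Nat.card B.edgeSet * Fintype.card α := by
  classical
  rw [Nat.card_eq_fintype_card, Nat.card_eq_fintype_card, Nat.card_eq_fintype_card,
    ← edgeFinset_card, ← edgeFinset_card, ← edgeFinset_card]
  have h := (A □ B).sum_degrees_eq_twice_card_edges
  have h2 : ∑ x : α × β, (A □ B).degree x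
      = 2 * (#A.edgeFinset * Fintype.card β + #B.edgeFinset * Fintype.card α) := by
    have key : ∀ x : α × β, (A □ B).degree x = A.degree x.1 + B.degree x.2 := fun x =>
      degree_boxProd x
    rw [Fintype.sum_prod_type]
    have key' : ∀ (a : α) (b : β), (A □ B).degree (a, b) = A.degree a + B.degree b :=
      fun a b => key (a, b)
    simp only [key']
    simp only [Finset.sum_add_distrib, Finset.sum_const, card_univ, smul_eq_mul]
    rw [← Finset.mul_sum, A.sum_degrees_eq_twice_card_edges,
      B.sum_degrees_eq_twice_card_edges]
    ring
  have hdeg : ∀ x : α × β,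
      @degree _ (A □ B) x ((A □ B).neighborSetFintype x) =
      @degree _ (A □ B) x (SimpleGraph.boxProdFintypeNeighborSet x) :=
    fun x => by congr 1; exact Subsingleton.elim _ _
  simp only [hdeg] at h
  have h3 := h.symm.trans h2
  omega

def sumColEquiv {V W : Type*} (G₁ : SimpleGraph V) (G₂ : SimpleGraph W) (k : ℕ) :
    {c : V ⊕ W → Fin k // IsProperColoring (G₁ ⊕g G₂) c} ≃
      {c : V → Fin k // IsProperColoring G₁ c} × {c : W → Fin k // IsProperColoring G₂ c} where
  toFun c := (⟨fun v => c.1 (.inl v), fun u v h => c.2 (by simpa using h)⟩,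
              ⟨fun w => c.1 (.inr w), fun u v h => c.2 (by simpa using h)⟩)
  invFun p := ⟨Sum.elim p.1.1 p.2.1, by
    rintro (u | u) (v | v) h
    · exact p.1.2 h
    · simp [SimpleGraph.sum] at h
    · simp [SimpleGraph.sum] at h
    · exact p.2.2 h⟩
  left_inv c := Subtype.ext (funext fun x => by cases x <;> rfl)
  right_inv p := rfl

def colGraphSumIso {V W : Type*} (G₁ : SimpleGraph V) (G₂ : SimpleGraph W) (k : ℕ) :
    ColGraph (G₁ ⊕g G₂) k ≃g (ColGraph G₁ k □ ColGraph G₂ k) where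
  toEquiv := sumColEquiv G₁ G₂ k
  map_rel_iff' := by
    intro a b
    show ((ColGraph G₁ k).Adj _ _ ∧ _ = _) ∨ ((ColGraph G₂ k).Adj _ _ ∧ _ = _) ↔
      ∃! x, a.1 x ≠ b.1 x
    rw [existsUnique_sum_iff (fun x => a.1 x ≠ b.1 x)]
    simp only [not_ne_iff]
    constructor
    · rintro (⟨h1, h2⟩ | ⟨h1, h2⟩)
      · exact Or.inl ⟨h1, fun w => congrFun (congrArg Subtype.val h2) w⟩
      · exact Or.inr ⟨h1, fun v => congrFun (congrArg Subtype.val h2) v⟩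
    · rintro (⟨h1, h2⟩ | ⟨h1, h2⟩)
      · exact Or.inl ⟨h1, Subtype.ext (funext h2)⟩
      · exact Or.inr ⟨h1, Subtype.ext (funext h2)⟩

/-- the chromatic pairs polynomial of a disjoint union. -/
theorem numEdges_disjoint_union {V W : Type*} [Fintype V] [Fintype W]
    (G₁ : SimpleGraph V) (G₂ : SimpleGraph W) (k : ℕ) :
    numEdges (G₁ ⊕g G₂) k =
      numEdges G₁ k * numColorings G₂ k + numEdges G₂ k * numColorings G₁ k := by
  classical
  unfold numEdges numColorings
  rw [Nat.card_congr (colGraphSumIso G₁ G₂ k).mapEdgeSet,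
    boxProd_nat_card_edgeSet (ColGraph G₁ k) (ColGraph G₂ k),
    Nat.card_eq_fintype_card, Nat.card_eq_fintype_card]
  simp only [Nat.card_eq_fintype_card]
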